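/- arXiv:1110.6630 — 7 statements merged into one kernel-verified Lean document; each statement's English description precedes it below -/
import Mathlib

section
/- In a geodesic δ-hyperbolic space, let b be a point, σ a geodesic, and R = d(b, σ). Let a ∈ σ be a foot of a perpendicular (i.e., a point of σ realizing the distance R from b), and let c be a point of σ with |b - c| = R + 2Δ for some Δ ≥ 0. Then |a - c| ≤ 2Δ + 4δ. -/
open Metric Set

/-- `s` is a geodesic segment from `x` to `y`. -/
def IsGeodSeg {X : Type*} [MetricSpace X] (x y : X) (s : Set X) : Prop :=
  ∃ f : ℝ → X, f 0 = x ∧ f (dist x y) = y ∧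
    (∀ a ∈ Icc (0:ℝ) (dist x y), ∀ b ∈ Icc (0:ℝ) (dist x y), dist (f a) (f b) = |a - b|) ∧
    s = f '' Icc (0:ℝ) (dist x y)

/-- A geodesic metric space: any two points are joined by a geodesic segment. -/
def GeodesicSpace (X : Type*) [MetricSpace X] : Prop :=
  ∀ x y : X, ∃ s : Set X, IsGeodSeg x y s

/-- δ-hyperbolicity via δ-thin geodesic triangles. -/
def ThinTriangles (X : Type*) [MetricSpace X] (δ : ℝ) : Prop :=
  ∀ (x y z : X) (sxy syz sxz : Set X),
    IsGeodSeg x y sxy → IsGeodSeg y z syz → IsGeodSeg x z sxz →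
    ∀ p ∈ sxy, infDist p (syz ∪ sxz) ≤ δ

lemma geod_add {X : Type*} [MetricSpace X] {u v q : X} {s : Set X}
    (h : IsGeodSeg u v s) (hq : q ∈ s) : dist u q + dist q v = dist u v := by
  obtain ⟨f, hf0, hfD, hiso, rfl⟩ := h
  obtain ⟨t, ht, rfl⟩ := hq
  have h0 : (0:ℝ) ∈ Icc (0:ℝ) (dist u v) := ⟨le_refl _, dist_nonneg⟩
  have hD : dist u v ∈ Icc (0:ℝ) (dist u v) := ⟨dist_nonneg, le_refl _⟩
  have h1 : dist u (f t) = t := by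
    rw [← hf0, hiso 0 h0 t ht, abs_sub_comm, sub_zero, abs_of_nonneg ht.1]
  have h2' := hiso t ht (dist u v) hD
  rw [hfD] at h2'
  have h2 : dist (f t) v = dist u v - t := by
    rw [h2', abs_of_nonpos (by linarith [ht.2])]; ring
  rw [h1, h2]; ring

lemma geod_compact {X : Type*} [MetricSpace X] {u v : X} {s : Set X}
    (h : IsGeodSeg u v s) : IsCompact s ∧ s.Nonempty := by
  obtain ⟨f, hf0, hfD, hiso, rfl⟩ := h
  constructor
  · refine isCompact_Icc.image_of_continuousOn ?_
    refine LipschitzOnWith.continuousOn (K := 1) ?_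
    apply LipschitzOnWith.of_dist_le_mul
    intro p hp q hq
    rw [hiso p hp q hq]
    simp [Real.dist_eq]
  · exact ⟨f 0, mem_image_of_mem f ⟨le_refl _, dist_nonneg⟩⟩

lemma geod_subseg {X : Type*} [MetricSpace X] {x y a c : X} {σ : Set X}
    (h : IsGeodSeg x y σ) (ha : a ∈ σ) (hc : c ∈ σ) :
    ∃ s, IsGeodSeg a c s ∧ s ⊆ σ := by
  obtain ⟨f, hf0, hfD, hiso, rfl⟩ := h
  set D := dist x y with hD
  obtain ⟨p, hp, rfl⟩ := ha
  obtain ⟨q, hq, rfl⟩ := hc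
  have hdac : dist (f p) (f q) = |p - q| := hiso p hp q hq
  rcases le_total p q with hpq | hpq
  · refine ⟨(fun t => f (p + t)) '' Icc 0 (dist (f p) (f q)), ⟨fun t => f (p + t), ?_, ?_, ?_, rfl⟩, ?_⟩
    · simp
    · show f (p + dist (f p) (f q)) = f q
      rw [hdac, abs_of_nonpos (by linarith), neg_sub, show p + (q - p) = q by ring]
    · intro s hs t ht
      rw [hdac, abs_of_nonpos (by linarith)] at hs ht
      have hs' : p + s ∈ Icc (0:ℝ) D := ⟨by linarith [hp.1, hs.1], by linarith [hq.2, hs.2]⟩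
      have ht' : p + t ∈ Icc (0:ℝ) D := ⟨by linarith [hp.1, ht.1], by linarith [hq.2, ht.2]⟩
      rw [hiso _ hs' _ ht']
      congr 1; ring
    · rintro _ ⟨t, ht, rfl⟩
      rw [hdac, abs_of_nonpos (by linarith)] at ht
      exact mem_image_of_mem f ⟨by linarith [hp.1, ht.1], by linarith [hq.2, ht.2]⟩
  · refine ⟨(fun t => f (p - t)) '' Icc 0 (dist (f p) (f q)), ⟨fun t => f (p - t), ?_, ?_, ?_, rfl⟩, ?_⟩
    · simp
    · show f (p - dist (f p) (f q)) = f q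
      rw [hdac, abs_of_nonneg (by linarith), show p - (p - q) = q by ring]
    · intro s hs t ht
      rw [hdac, abs_of_nonneg (by linarith)] at hs ht
      have hs' : p - s ∈ Icc (0:ℝ) D := ⟨by linarith [hq.1, hs.2], by linarith [hp.2, hs.1]⟩
      have ht' : p - t ∈ Icc (0:ℝ) D := ⟨by linarith [hq.1, ht.2], by linarith [hp.2, ht.1]⟩
      rw [hiso _ hs' _ ht']
      rw [show p - s - (p - t) = -(s - t) by ring, abs_neg]
    · rintro _ ⟨t, ht, rfl⟩
      rw [hdac, abs_of_nonneg (by linarith)] at ht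
      exact mem_image_of_mem f ⟨by linarith [hq.1, ht.2], by linarith [hp.2, ht.1]⟩

theorem lemma1_foot_of_perpendicular {X : Type*} [MetricSpace X] (δ : ℝ) (hδ : 0 ≤ δ)
    (hgeo : GeodesicSpace X) (hthin : ThinTriangles X δ)
    (x y b a c : X) (σ : Set X) (Δ : ℝ) (hΔ : 0 ≤ Δ)
    (hσ : IsGeodSeg x y σ)
    (ha : a ∈ σ) (haR : dist b a = infDist b σ)
    (hc : c ∈ σ) (hcR : dist b c = infDist b σ + 2 * Δ) :
    dist a c ≤ 2 * Δ + 4 * δ := by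
  set R := infDist b σ with hR
  obtain ⟨sac, hsac, hsub⟩ := geod_subseg hσ ha hc
  obtain ⟨scb, hscb⟩ := hgeo c b
  obtain ⟨sab, hsab⟩ := hgeo a b
  have hcompU : IsCompact (scb ∪ sab) :=
    (geod_compact hscb).1.union (geod_compact hsab).1
  have hneU : (scb ∪ sab).Nonempty := (geod_compact hscb).2.mono subset_union_left
  -- dichotomy for points on [a,c]
  have key : ∀ p ∈ sac, dist a p ≤ 2 * δ ∨ dist c p ≤ 2 * Δ + 2 * δ := by
    intro p hp
    have hth := hthin a c b sac scb sab hsac hscb hsab p hp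
    obtain ⟨q, hqmem, hqd⟩ := hcompU.exists_infDist_eq_dist hneU p
    rw [hqd] at hth
    have hpσ : p ∈ σ := hsub hp
    have hRp : R ≤ dist b p := infDist_le_dist_of_mem hpσ
    rcases hqmem with hq | hq
    · -- q on [c,b]
      right
      have hsum : dist c q + dist q b = dist c b := geod_add hscb hq
      have h1 : dist b p ≤ dist b q + dist q p := dist_triangle _ _ _
      have h2 : dist c b = R + 2 * Δ := by rw [dist_comm]; exact hcR
      have h3 : dist q p = dist p q := dist_comm _ _
      have h4 : dist b q = dist q b := dist_comm _ _
      have hcq : dist c q ≤ 2 * Δ + δ := by linarith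
      have : dist c p ≤ dist c q + dist q p := dist_triangle _ _ _
      linarith
    · -- q on [a,b]
      left
      have hsum : dist a q + dist q b = dist a b := geod_add hsab hq
      have h1 : dist b p ≤ dist b q + dist q p := dist_triangle _ _ _
      have h2 : dist a b = R := by rw [dist_comm]; exact haR
      have h3 : dist q p = dist p q := dist_comm _ _
      have h4 : dist b q = dist q b := dist_comm _ _
      have haq : dist a q ≤ δ := by linarith
      have : dist a p ≤ dist a q + dist q p := dist_triangle _ _ _
      linarith
  by_contra hcon
  push_neg at hcon
  set L := dist a c with hL
  obtain ⟨g, hg0, hgL, hgiso, hgs⟩ := hsac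
  set t : ℝ := L / 2 - Δ with htdef
  have ht : t ∈ Icc (0:ℝ) L := ⟨by simp only [htdef]; linarith, by simp only [htdef]; linarith⟩
  have h0 : (0:ℝ) ∈ Icc (0:ℝ) L := ⟨le_refl _, dist_nonneg⟩
  have hLm : L ∈ Icc (0:ℝ) L := ⟨dist_nonneg, le_refl _⟩
  have hpmem : g t ∈ sac := by rw [hgs]; exact mem_image_of_mem g ht
  have hap : dist a (g t) = t := by
    rw [← hg0, hgiso 0 h0 t ht, abs_sub_comm, sub_zero, abs_of_nonneg ht.1]
  have hcp : dist c (g t) = L - t := by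
    rw [← hgL, hgiso L hLm t ht, abs_of_nonneg (by linarith [ht.2])]
  rcases key (g t) hpmem with h | h
  · rw [hap] at h; simp only [htdef] at h; linarith
  · rw [hcp] at h; simp only [htdef] at h; linarith
end

section
/- In a geodesic δ-hyperbolic space, let b and d be points with |b - d| = Δ, let σ be a geodesic, and let a and c be orthogonal projections of b and d on σ respectively. Assume |a - b| > 3Δ + 6δ and d(d, σ) ≥ d(b, σ). Then |a - c| ≤ 8δ. -/
open Metric Set

lemma isGeodSeg_symm' {X : Type*} [MetricSpace X] {x y : X} {s : Set X}
    (h : IsGeodSeg x y s) : IsGeodSeg y x s := by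
  obtain ⟨f, h0, hL, hiso, rfl⟩ := h
  have hd : dist y x = dist x y := dist_comm y x
  refine ⟨fun u => f (dist x y - u), by simp [hL], by simp [hd, h0], ?_, ?_⟩
  · intro p hp q hq
    rw [hd] at hp hq
    have := hiso (dist x y - p) ⟨by linarith [hp.2], by linarith [hp.1]⟩
      (dist x y - q) ⟨by linarith [hq.2], by linarith [hq.1]⟩
    rw [this, abs_sub_comm]
    ring_nf
  · rw [hd]
    ext z
    constructor
    · rintro ⟨u, hu, rfl⟩
      exact ⟨dist x y - u, ⟨by linarith [hu.2], by linarith [hu.1]⟩, by ring_nf⟩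
    · rintro ⟨u, hu, rfl⟩
      exact ⟨dist x y - u, ⟨by linarith [hu.2], by linarith [hu.1]⟩, by ring_nf⟩

lemma isGeodSeg_dist_add {X : Type*} [MetricSpace X] {x y : X} {s : Set X}
    (h : IsGeodSeg x y s) {p : X} (hp : p ∈ s) :
    dist x p + dist p y = dist x y := by
  obtain ⟨f, h0, hL, hiso, rfl⟩ := h
  obtain ⟨u, hu, rfl⟩ := hp
  have h1 := hiso 0 ⟨le_refl _, dist_nonneg⟩ u hu
  have h2 := hiso u hu (dist x y) ⟨dist_nonneg, le_refl _⟩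
  rw [h0] at h1
  rw [hL] at h2
  rw [h1, h2]
  rw [abs_of_nonpos (by linarith [hu.1]), abs_of_nonpos (by linarith [hu.2])]
  ring

lemma isGeodSeg_compact {X : Type*} [MetricSpace X] {x y : X} {s : Set X}
    (h : IsGeodSeg x y s) : IsCompact s := by
  obtain ⟨f, h0, hL, hiso, rfl⟩ := h
  apply isCompact_Icc.image_of_continuousOn
  apply LipschitzOnWith.continuousOn (K := 1)
  rw [lipschitzOnWith_iff_dist_le_mul]
  intro p hp q hq
  rw [hiso p hp q hq, Real.dist_eq]
  simp

lemma isGeodSeg_left_mem {X : Type*} [MetricSpace X] {x y : X} {s : Set X}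
    (h : IsGeodSeg x y s) : x ∈ s := by
  obtain ⟨f, h0, hL, hiso, rfl⟩ := h
  exact ⟨0, ⟨le_refl _, dist_nonneg⟩, h0⟩

lemma isGeodSeg_subseg {X : Type*} [MetricSpace X] {f : ℝ → X} {L s t : ℝ}
    (hs : s ∈ Icc (0:ℝ) L) (ht : t ∈ Icc (0:ℝ) L) (hst : s ≤ t)
    (hiso : ∀ a ∈ Icc (0:ℝ) L, ∀ b ∈ Icc (0:ℝ) L, dist (f a) (f b) = |a - b|) :
    IsGeodSeg (f s) (f t) (f '' Icc s t) := by
  have hd : dist (f s) (f t) = t - s := by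
    rw [hiso s hs t ht, abs_sub_comm, abs_of_nonneg (by linarith)]
  refine ⟨fun u => f (s + u), by simp, by rw [hd]; ring_nf, ?_, ?_⟩
  · intro p hp q hq
    rw [hd] at hp hq
    have h1 : s + p ∈ Icc (0:ℝ) L := ⟨by linarith [hs.1, hp.1], by linarith [hp.2, ht.2]⟩
    have h2 : s + q ∈ Icc (0:ℝ) L := ⟨by linarith [hs.1, hq.1], by linarith [hq.2, ht.2]⟩
    rw [hiso _ h1 _ h2]
    ring_nf
  · rw [hd]
    ext z
    simp only [mem_image]
    constructor
    · rintro ⟨v, hv, rfl⟩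
      exact ⟨v - s, ⟨by linarith [hv.1], by linarith [hv.2]⟩,
        by rw [show s + (v - s) = v from by ring]⟩
    · rintro ⟨v, hv, rfl⟩
      exact ⟨s + v, ⟨by linarith [hv.1], by linarith [hv.2]⟩, rfl⟩

theorem lemma2_projections_close {X : Type*} [MetricSpace X] (δ : ℝ) (hδ : 0 ≤ δ)
    (hgeo : GeodesicSpace X) (hthin : ThinTriangles X δ)
    (x y b d a c : X) (σ : Set X) (Δ : ℝ)
    (hσ : IsGeodSeg x y σ) (hΔ : dist b d = Δ)
    (ha : a ∈ σ) (haP : dist b a = infDist b σ)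
    (hc : c ∈ σ) (hcP : dist d c = infDist d σ)
    (hfar : dist a b > 3 * Δ + 6 * δ)
    (hord : infDist b σ ≤ infDist d σ) :
    dist a c ≤ 8 * δ := by
  have hΔ0 : 0 ≤ Δ := hΔ ▸ dist_nonneg
  obtain ⟨f, hf0, hfL, hiso, hσeq⟩ := hσ
  obtain ⟨s0, hs0, hfs0⟩ := hσeq ▸ ha
  obtain ⟨t0, ht0, hft0⟩ := hσeq ▸ hc
  set u : ℝ := (s0 + t0) / 2 with hu
  have huI : u ∈ Icc (0:ℝ) (dist x y) :=
    ⟨by simp only [hu]; linarith [hs0.1, ht0.1], by simp only [hu]; linarith [hs0.2, ht0.2]⟩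
  set m : X := f u with hm
  have hmσ : m ∈ σ := hσeq ▸ ⟨u, huI, rfl⟩
  have hac : dist a c = |s0 - t0| := by rw [← hfs0, ← hft0, hiso s0 hs0 t0 ht0]
  have ham : dist a m = dist a c / 2 := by
    rw [hac, ← hfs0, hm, hiso s0 hs0 u huI,
      show s0 - u = (s0 - t0) / 2 by rw [hu]; ring, abs_div, abs_two]
  have hcm : dist c m = dist a c / 2 := by
    rw [hac, ← hft0, hm, hiso t0 ht0 u huI,
      show t0 - u = -((s0 - t0) / 2) by rw [hu]; ring, abs_neg, abs_div, abs_two]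
  -- the subsegment of σ from a to c containing m
  have hsub : ∃ S : Set X, IsGeodSeg a c S ∧ m ∈ S := by
    rcases le_total s0 t0 with h | h
    · refine ⟨f '' Icc s0 t0, ?_, ⟨u, ⟨by simp only [hu]; linarith, by simp only [hu]; linarith⟩, rfl⟩⟩
      rw [← hfs0, ← hft0]
      exact isGeodSeg_subseg hs0 ht0 h hiso
    · refine ⟨f '' Icc t0 s0, ?_, ⟨u, ⟨by simp only [hu]; linarith, by simp only [hu]; linarith⟩, rfl⟩⟩
      rw [← hfs0, ← hft0]
      exact isGeodSeg_symm' (isGeodSeg_subseg ht0 hs0 h hiso)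
  obtain ⟨S, hS, hmS⟩ := hsub
  obtain ⟨scd, hscd⟩ := hgeo c d
  obtain ⟨sad, hsad⟩ := hgeo a d
  obtain ⟨sdb, hsdb⟩ := hgeo d b
  obtain ⟨sab, hsab⟩ := hgeo a b
  -- projections: distances from b, d to m
  have hbm : dist b a ≤ dist b m := haP ▸ infDist_le_dist_of_mem hmσ
  have hdm : dist d c ≤ dist d m := hcP ▸ infDist_le_dist_of_mem hmσ
  -- first triangle a c d, point m on side [a,c]
  have h1 : infDist m (scd ∪ sad) ≤ δ := hthin a c d S scd sad hS hscd hsad m hmS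
  have hcpt1 : IsCompact (scd ∪ sad) := (isGeodSeg_compact hscd).union (isGeodSeg_compact hsad)
  have hne1 : (scd ∪ sad).Nonempty := ⟨c, Or.inl (isGeodSeg_left_mem hscd)⟩
  obtain ⟨q, hq, hqd⟩ := hcpt1.exists_infDist_eq_dist hne1 m
  have hmq : dist m q ≤ δ := hqd ▸ h1
  rcases hq with hq | hq
  · -- q on [c,d] : then m is close to c
    have h2 : dist c q + dist q d = dist c d := isGeodSeg_dist_add hscd hq
    have h3 : dist d m ≤ dist d q + dist q m := dist_triangle d q m
    have h4 : dist c m ≤ dist c q + dist q m := dist_triangle c q m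
    have e1 : dist q d = dist d q := dist_comm q d
    have e2 : dist q m = dist m q := dist_comm q m
    have e3 : dist d c = dist c d := dist_comm d c
    linarith [hcm, hdm, hmq]
  · -- q on [a,d] : second triangle a d b, point q on side [a,d]
    have h2 : infDist q (sdb ∪ sab) ≤ δ := hthin a d b sad sdb sab hsad hsdb hsab q hq
    have hcpt2 : IsCompact (sdb ∪ sab) := (isGeodSeg_compact hsdb).union (isGeodSeg_compact hsab)
    have hne2 : (sdb ∪ sab).Nonempty := ⟨d, Or.inl (isGeodSeg_left_mem hsdb)⟩
    obtain ⟨r, hr, hrd⟩ := hcpt2.exists_infDist_eq_dist hne2 q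
    have hqr : dist q r ≤ δ := hrd ▸ h2
    have hbmchain : dist b m ≤ dist b r + dist r q + dist q m := by
      calc dist b m ≤ dist b q + dist q m := dist_triangle b q m
        _ ≤ (dist b r + dist r q) + dist q m := by linarith [dist_triangle b r q]
    have e2 : dist q m = dist m q := dist_comm q m
    have e4 : dist r q = dist q r := dist_comm r q
    have e5 : dist b a = dist a b := dist_comm b a
    rcases hr with hr | hr
    · -- r on [d,b] : contradiction with hfar
      exfalso
      have h3 : dist d r + dist r b = dist d b := isGeodSeg_dist_add hsdb hr
      have e6 : dist d b = dist b d := dist_comm d b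
      have e7 : dist b r = dist r b := dist_comm b r
      have := dist_nonneg (x := d) (y := r)
      linarith [hbm, hmq, hqr]
    · -- r on [a,b] : m is close to a
      have h3 : dist a r + dist r b = dist a b := isGeodSeg_dist_add hsab hr
      have e7 : dist b r = dist r b := dist_comm b r
      have har : dist a r ≤ 2 * δ := by linarith [hbm, hmq, hqr]
      have hchain : dist a m ≤ dist a r + dist r q + dist q m := by
        calc dist a m ≤ dist a q + dist q m := dist_triangle a q m
          _ ≤ (dist a r + dist r q) + dist q m := by linarith [dist_triangle a r q]
      linarith [ham, hmq, hqr, har]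
end

section
/- In a geodesic δ-hyperbolic space, let σ be a geodesic segment and let a and b be two points having a common orthogonal projection c on σ. Let d be a point of σ and let c₁ be an orthogonal projection of d on a geodesic segment ab. Then |d - c| ≤ |d - c₁| + 6δ. -/
open Metric Set

namespace GeodAux

variable {X : Type*} [MetricSpace X]

theorem left_mem {x y : X} {s : Set X} (h : IsGeodSeg x y s) : x ∈ s := by
  obtain ⟨f, h0, hL, hiso, him⟩ := h
  rw [him]
  exact ⟨0, ⟨le_refl 0, dist_nonneg⟩, h0⟩

theorem right_mem {x y : X} {s : Set X} (h : IsGeodSeg x y s) : y ∈ s := by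
  obtain ⟨f, h0, hL, hiso, him⟩ := h
  rw [him]
  exact ⟨dist x y, ⟨dist_nonneg, le_refl _⟩, hL⟩

theorem geod_continuousOn {f : ℝ → X} {D : ℝ}
    (hiso : ∀ a ∈ Icc (0:ℝ) D, ∀ b ∈ Icc (0:ℝ) D, dist (f a) (f b) = |a - b|) :
    ContinuousOn f (Icc (0:ℝ) D) := by
  have : LipschitzOnWith 1 f (Icc (0:ℝ) D) := by
    rw [lipschitzOnWith_iff_dist_le_mul]
    intro p hp q hq
    rw [hiso p hp q hq, Real.dist_eq]
    simp
  exact this.continuousOn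

theorem seg_isCompact {x y : X} {s : Set X} (h : IsGeodSeg x y s) : IsCompact s := by
  obtain ⟨f, h0, hL, hiso, him⟩ := h
  rw [him]
  exact isCompact_Icc.image_of_continuousOn (geod_continuousOn hiso)

theorem symm {x y : X} {s : Set X} (h : IsGeodSeg x y s) : IsGeodSeg y x s := by
  obtain ⟨f, h0, hL, hiso, him⟩ := h
  refine ⟨fun t => f (dist x y - t), by simp [hL], ?_, ?_, ?_⟩
  · rw [dist_comm y x]
    simpa using h0
  · intro p hp q hq
    rw [dist_comm y x] at hp hq
    have hp' : dist x y - p ∈ Icc (0:ℝ) (dist x y) := ⟨by linarith [hp.2], by linarith [hp.1]⟩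
    have hq' : dist x y - q ∈ Icc (0:ℝ) (dist x y) := ⟨by linarith [hq.2], by linarith [hq.1]⟩
    rw [hiso _ hp' _ hq', abs_sub_comm]
    congr 1
    ring
  · rw [him, dist_comm y x]
    have heq : (fun t => f (dist x y - t)) = f ∘ (fun t => dist x y - t) := rfl
    rw [heq, Set.image_comp, Set.image_const_sub_Icc]
    congr 1
    simp

theorem subseg_aux {f : ℝ → X} {D u v : ℝ}
    (hiso : ∀ a ∈ Icc (0:ℝ) D, ∀ b ∈ Icc (0:ℝ) D, dist (f a) (f b) = |a - b|)
    (hu : u ∈ Icc (0:ℝ) D) (hv : v ∈ Icc (0:ℝ) D) (huv : u ≤ v) :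
    IsGeodSeg (f u) (f v) (f '' Icc u v) := by
  have hdist : dist (f u) (f v) = v - u := by
    rw [hiso u hu v hv, abs_of_nonpos (by linarith)]
    ring
  refine ⟨fun r => f (u + r), by simp, ?_, ?_, ?_⟩
  · rw [hdist]
    congr 1
    ring
  · intro p hp q hq
    rw [hdist] at hp hq
    have hp' : u + p ∈ Icc (0:ℝ) D := ⟨by linarith [hu.1, hp.1], by linarith [hv.2, hp.2]⟩
    have hq' : u + q ∈ Icc (0:ℝ) D := ⟨by linarith [hu.1, hq.1], by linarith [hv.2, hq.2]⟩
    rw [hiso _ hp' _ hq']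
    congr 1
    ring
  · rw [hdist]
    have heq : (fun r => f (u + r)) = f ∘ (fun r => u + r) := rfl
    rw [heq, Set.image_comp, Set.image_const_add_Icc]
    congr 1 <;> ring

theorem subseg {x y p q : X} {s : Set X} (h : IsGeodSeg x y s) (hp : p ∈ s) (hq : q ∈ s) :
    ∃ t : Set X, IsGeodSeg p q t ∧ t ⊆ s := by
  obtain ⟨f, h0, hL, hiso, him⟩ := h
  rw [him] at hp hq
  obtain ⟨u, hu, hfu⟩ := hp
  obtain ⟨v, hv, hfv⟩ := hq
  rcases le_total u v with huv | hvu
  · refine ⟨f '' Icc u v, by rw [← hfu, ← hfv]; exact subseg_aux hiso hu hv huv, ?_⟩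
    rw [him]
    exact Set.image_mono (f := f) (Icc_subset_Icc hu.1 hv.2)
  · refine ⟨f '' Icc v u, ?_, ?_⟩
    · rw [← hfu, ← hfv]
      exact symm (subseg_aux hiso hv hu hvu)
    · rw [him]
      exact Set.image_mono (f := f) (Icc_subset_Icc hv.1 hu.2)

/-- If `c` is a nearest point of `σ` to `a` and `u` lies on a geodesic from `a` to `c`,
then `c` is a nearest point of `σ` to `u` as well. -/
theorem proj_dist {a c : X} {σ α : Set X} (hα : IsGeodSeg a c α)
    (hcP : dist a c = infDist a σ) {u : X} (hu : u ∈ α) {z : X} (hz : z ∈ σ) :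
    dist u c ≤ dist u z := by
  obtain ⟨f, h0, hL, hiso, him⟩ := hα
  rw [him] at hu
  obtain ⟨t, ht, hft⟩ := hu
  have hau : dist a u = t := by
    rw [← h0, ← hft, hiso 0 ⟨le_refl _, dist_nonneg⟩ t ht,
      abs_of_nonpos (by linarith [ht.1])]
    ring
  have huc : dist u c = dist a c - t := by
    have h := hiso t ht (dist a c) ⟨dist_nonneg, le_refl _⟩
    rw [hft, hL] at h
    rw [h, abs_of_nonpos (by linarith [ht.2])]
    ring
  have h1 : dist a c ≤ dist a z := by
    rw [hcP]
    exact infDist_le_dist_of_mem hz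
  have h2 : dist a z ≤ dist a u + dist u z := dist_triangle a u z
  rw [huc]
  linarith

theorem thin_exact {δ : ℝ} (hthin : ThinTriangles X δ) {x y z : X} {sxy syz sxz : Set X}
    (hxy : IsGeodSeg x y sxy) (hyz : IsGeodSeg y z syz) (hxz : IsGeodSeg x z sxz)
    {p : X} (hp : p ∈ sxy) : ∃ w ∈ syz ∪ sxz, dist p w ≤ δ := by
  have hcpt : IsCompact (syz ∪ sxz) := (seg_isCompact hyz).union (seg_isCompact hxz)
  obtain ⟨w, hw, hwd⟩ := hcpt.exists_infDist_eq_dist ⟨y, Or.inl (left_mem hyz)⟩ p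
  exact ⟨w, hw, hwd ▸ hthin x y z sxy syz sxz hxy hyz hxz p hp⟩

/-- Key lemma: the case where the point `c₂` (δ-close to `c₁`) lies on a geodesic
from `a` to `d`. -/
theorem key (δ : ℝ) (hδ : 0 ≤ δ) (hgeo : GeodesicSpace X) (hthin : ThinTriangles X δ)
    (a b c d c₁ c₂ : X) (σ τ γ sdc : Set X)
    (hcPa : dist a c = infDist a σ) (hcPb : dist b c = infDist b σ)
    (hτ : IsGeodSeg a b τ) (hc₁ : c₁ ∈ τ)
    (hγ : IsGeodSeg a d γ) (hc₂ : c₂ ∈ γ) (h12 : dist c₁ c₂ ≤ δ)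
    (hsdc : IsGeodSeg d c sdc) (hsub : sdc ⊆ σ) :
    dist d c ≤ dist d c₁ + 4 * δ := by
  obtain ⟨α, hα⟩ := hgeo a c
  obtain ⟨β, hβ⟩ := hgeo b c
  -- Whenever `c₁` is 2δ-close to a point of `σ`, we are done:
  have h3B : ∀ z ∈ σ, dist c₁ z ≤ 2 * δ → dist d c ≤ dist d c₁ + 4 * δ := by
    intro z hz hz2
    obtain ⟨u, hu, hud⟩ := thin_exact hthin hτ hβ hα hc₁
    have huc : dist u c ≤ dist u z := by
      rcases hu with hu | hu
      · exact proj_dist hβ hcPb hu hz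
      · exact proj_dist hα hcPa hu hz
    have e1 : dist u z ≤ dist u c₁ + dist c₁ z := dist_triangle u c₁ z
    have e2 : dist d c ≤ dist d c₁ + dist c₁ c := dist_triangle d c₁ c
    have e3 : dist c₁ c ≤ dist c₁ u + dist u c := dist_triangle c₁ u c
    have e4 : dist c₁ u = dist u c₁ := dist_comm _ _
    linarith
  obtain ⟨g, hg0, hgL, hgiso, hgim⟩ := id hγ
  set L := dist a d with hLdef
  have hL0 : (0:ℝ) ≤ L := dist_nonneg
  set G : ℝ → X := fun t => g (max 0 (min t L)) with hGdef
  have hclamp : ∀ t ∈ Icc (0:ℝ) L, max 0 (min t L) = t := by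
    intro t ht
    rw [min_eq_left ht.2, max_eq_right ht.1]
  have hGeq : ∀ t ∈ Icc (0:ℝ) L, G t = g t := by
    intro t ht
    simp only [hGdef]
    rw [hclamp t ht]
  have hmem : ∀ t : ℝ, max 0 (min t L) ∈ Icc (0:ℝ) L :=
    fun t => ⟨le_max_left _ _, max_le hL0 (min_le_right _ _)⟩
  have hGcont : Continuous G :=
    (geod_continuousOn hgiso).comp_continuous
      (continuous_const.max (continuous_id.min continuous_const)) hmem
  rw [hgim] at hc₂
  obtain ⟨t₂, ht₂, hgt₂⟩ := hc₂
  have hGt₂ : G t₂ = c₂ := by rw [hGeq t₂ ht₂, hgt₂]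
  have hGmem : ∀ t ∈ Icc (0:ℝ) L, G t ∈ γ := by
    intro t ht
    rw [hGeq t ht, hgim]
    exact mem_image_of_mem _ ht
  have cover : ∀ t ∈ Icc (0:ℝ) L, infDist (G t) α ≤ δ ∨ infDist (G t) sdc ≤ δ := by
    intro t ht
    obtain ⟨w, hw, hwd⟩ := thin_exact hthin hγ hsdc hα (hGmem t ht)
    rcases hw with hw | hw
    · exact Or.inr (le_trans (infDist_le_dist_of_mem hw) hwd)
    · exact Or.inl (le_trans (infDist_le_dist_of_mem hw) hwd)
  rcases cover t₂ ht₂ with hA2 | hB2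
  · -- connectedness argument along γ from t₂ to L
    set A := {t : ℝ | infDist (G t) α ≤ δ} with hAdef
    set B := {t : ℝ | infDist (G t) sdc ≤ δ} with hBdef
    have hAc : IsClosed A := isClosed_le ((continuous_infDist_pt α).comp hGcont) continuous_const
    have hBc : IsClosed B := isClosed_le ((continuous_infDist_pt sdc).comp hGcont) continuous_const
    have hcov : Icc t₂ L ⊆ A ∪ B := by
      intro t ht
      rcases cover t ⟨le_trans ht₂.1 ht.1, ht.2⟩ with h | h
      · exact Or.inl h
      · exact Or.inr h
    have hLB : L ∈ B := by
      have hGL : G L = d := by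
        rw [hGeq L ⟨hL0, le_refl _⟩]
        exact hgL
      simp only [hBdef, mem_setOf_eq, hGL]
      calc infDist d sdc ≤ dist d d := infDist_le_dist_of_mem (left_mem hsdc)
        _ = 0 := dist_self d
        _ ≤ δ := hδ
    have hSA : (Icc t₂ L ∩ A).Nonempty := ⟨t₂, ⟨le_refl _, ht₂.2⟩, by
      simp only [hAdef, mem_setOf_eq]; exact hA2⟩
    have hSB : (Icc t₂ L ∩ B).Nonempty := ⟨L, ⟨ht₂.2, le_refl _⟩, hLB⟩
    obtain ⟨tm, htmS, htmA, htmB⟩ :=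
      isPreconnected_closed_iff.1 isPreconnected_Icc A B hAc hBc hcov hSA hSB
    obtain ⟨u, hu, hud⟩ := (seg_isCompact hα).exists_infDist_eq_dist ⟨a, left_mem hα⟩ (G tm)
    have hu1 : dist (G tm) u ≤ δ := by rw [← hud]; exact htmA
    obtain ⟨z, hz, hzd⟩ := (seg_isCompact hsdc).exists_infDist_eq_dist ⟨d, left_mem hsdc⟩ (G tm)
    have hz1 : dist (G tm) z ≤ δ := by rw [← hzd]; exact htmB
    have huc : dist u c ≤ dist u z := proj_dist hα hcPa hu (hsub hz)
    have htmIcc : tm ∈ Icc (0:ℝ) L := ⟨le_trans ht₂.1 htmS.1, htmS.2⟩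
    have hdm : dist d (G tm) = L - tm := by
      rw [hGeq tm htmIcc, ← hgL, dist_comm,
        hgiso tm htmIcc (dist a d) ⟨dist_nonneg, le_refl _⟩,
        abs_of_nonpos (by linarith [htmIcc.2])]
      ring
    have hdc₂ : dist d c₂ = L - t₂ := by
      rw [← hgt₂, ← hgL, dist_comm,
        hgiso t₂ ht₂ (dist a d) ⟨dist_nonneg, le_refl _⟩,
        abs_of_nonpos (by linarith [ht₂.2])]
      ring
    have e1 : dist d c ≤ dist d (G tm) + dist (G tm) c := dist_triangle _ _ _
    have e2 : dist (G tm) c ≤ dist (G tm) u + dist u c := dist_triangle _ _ _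
    have e3 : dist u z ≤ dist u (G tm) + dist (G tm) z := dist_triangle _ _ _
    have e4 : dist d c₂ ≤ dist d c₁ + dist c₁ c₂ := dist_triangle _ _ _
    have e5 : dist u (G tm) = dist (G tm) u := dist_comm _ _
    linarith [htmS.1]
  · -- `c₂` is close to `σ`
    obtain ⟨z, hz, hzd⟩ := (seg_isCompact hsdc).exists_infDist_eq_dist ⟨d, left_mem hsdc⟩ c₂
    have hz1 : dist c₂ z ≤ δ := by
      rw [← hzd, ← hGt₂]
      exact hB2
    exact h3B z (hsub hz) (by linarith [dist_triangle c₁ c₂ z])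

end GeodAux

theorem lemma5_common_projection {X : Type*} [MetricSpace X] (δ : ℝ) (hδ : 0 ≤ δ)
    (hgeo : GeodesicSpace X) (hthin : ThinTriangles X δ)
    (x y a b c d c₁ : X) (σ τ : Set X)
    (hσ : IsGeodSeg x y σ)
    (hc : c ∈ σ) (hcPa : dist a c = infDist a σ) (hcPb : dist b c = infDist b σ)
    (hd : d ∈ σ)
    (hτ : IsGeodSeg a b τ)
    (hc₁ : c₁ ∈ τ) (hc₁P : dist d c₁ = infDist d τ) :
    dist d c ≤ dist d c₁ + 6 * δ := by
  obtain ⟨γa, hγa⟩ := hgeo a d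
  obtain ⟨γb, hγb⟩ := hgeo b d
  obtain ⟨c₂, hc₂, h12⟩ := GeodAux.thin_exact hthin hτ hγb hγa hc₁
  obtain ⟨sdc, hsdc, hsub⟩ := GeodAux.subseg hσ hd hc
  rcases hc₂ with h2 | h2
  · have := GeodAux.key δ hδ hgeo hthin b a c d c₁ c₂ σ τ γb sdc hcPb hcPa
      (GeodAux.symm hτ) hc₁ hγb h2 h12 hsdc hsub
    linarith
  · have := GeodAux.key δ hδ hgeo hthin a b c d c₁ c₂ σ τ γa sdc hcPa hcPb
      hτ hc₁ hγa h2 h12 hsdc hsub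
    linarith
end

section
/- Let γ : [0, l] → F be a (λ, c)-quasi-geodesic in a metric space F and let Δ ≥ 2c. Then the Δ-length of γ satisfies L_Δ(γ) ≤ 2λl. -/
open Metric Set

/-- `γ` is a `(lam, c)`-quasi-geodesic (quasi-isometric embedding) on the set `I ⊆ ℝ`. -/
def IsQuasiGeodesicOn {X : Type*} [MetricSpace X] (lam c : ℝ) (γ : ℝ → X) (I : Set ℝ) : Prop :=
  ∀ s ∈ I, ∀ t ∈ I,
    |s - t| / lam - c ≤ dist (γ s) (γ t) ∧ dist (γ s) (γ t) ≤ lam * |s - t| + c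

/-- Lemma 7: the Δ-length of a (λ,c)-quasi-geodesic on an interval of length `l` is at most
`2λl` (for `Δ ≥ 2c`): every subdivision of `[0, l]` with mesh ≥ Δ has total image length ≤ 2λl;
hence the supremum over such subdivisions, the Δ-length, is ≤ 2λl. -/
theorem delta_length_le {F : Type*} [MetricSpace F] (lam c Δ l : ℝ)
    (hlam : 1 ≤ lam) (hc : 0 ≤ c) (hl : 0 ≤ l) (hΔ : 2 * c ≤ Δ)
    (γ : ℝ → F) (hγ : IsQuasiGeodesicOn lam c γ (Icc 0 l))
    (n : ℕ) (x : ℕ → ℝ)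
    (hx0 : x 0 = 0) (hxn : x n = l)
    (hmono : ∀ i < n, x i ≤ x (i + 1))
    (hmem : ∀ i ≤ n, x i ∈ Icc (0:ℝ) l)
    (hmesh : ∀ i < n, Δ ≤ dist (γ (x (i + 1))) (γ (x i))) :
    ∑ i ∈ Finset.range n, dist (γ (x (i + 1))) (γ (x i)) ≤ 2 * lam * l := by
  have key : ∀ i < n, dist (γ (x (i + 1))) (γ (x i)) ≤ 2 * lam * (x (i + 1) - x i) := by
    intro i hi
    have h1 := (hγ (x (i + 1)) (hmem _ hi) (x i) (hmem _ hi.le)).2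
    have hd : x i ≤ x (i + 1) := hmono i hi
    rw [abs_of_nonneg (by linarith)] at h1
    have h2 := hmesh i hi
    nlinarith
  calc ∑ i ∈ Finset.range n, dist (γ (x (i + 1))) (γ (x i))
      ≤ ∑ i ∈ Finset.range n, 2 * lam * (x (i + 1) - x i) :=
        Finset.sum_le_sum fun i hi => key i (Finset.mem_range.mp hi)
    _ = 2 * lam * (x n - x 0) := by rw [← Finset.mul_sum, Finset.sum_range_sub]
    _ = 2 * lam * l := by rw [hx0, hxn]; ring
end

section
/- Let γ : [0, l] → F be a (λ, c)-quasi-geodesic whose endpoints are at distance R ≥ c, and let Δ ≥ 2c. Then the Δ-length satisfies L_Δ(γ) ≤ 4λ²R. -/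
open Metric Set

/-- Lemma 8: if the endpoints of a (λ,c)-quasi-geodesic are at distance `R ≥ c` and `Δ ≥ 2c`,
then the Δ-length is at most `4λ²R`: every subdivision with mesh ≥ Δ has total length ≤ 4λ²R. -/
theorem delta_length_le_of_endpoints {F : Type*} [MetricSpace F] (lam c Δ l : ℝ)
    (hlam : 1 ≤ lam) (hc : 0 ≤ c) (hl : 0 ≤ l) (hΔ : 2 * c ≤ Δ)
    (γ : ℝ → F) (hγ : IsQuasiGeodesicOn lam c γ (Icc 0 l))
    (hR : c ≤ dist (γ 0) (γ l))
    (n : ℕ) (x : ℕ → ℝ)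
    (hx0 : x 0 = 0) (hxn : x n = l)
    (hmono : ∀ i < n, x i ≤ x (i + 1))
    (hmem : ∀ i ≤ n, x i ∈ Icc (0:ℝ) l)
    (hmesh : ∀ i < n, Δ ≤ dist (γ (x (i + 1))) (γ (x i))) :
    ∑ i ∈ Finset.range n, dist (γ (x (i + 1))) (γ (x i)) ≤ 4 * lam ^ 2 * dist (γ 0) (γ l) := by
  have hlam0 : (0:ℝ) < lam := lt_of_lt_of_le one_pos hlam
  have key : ∀ i ∈ Finset.range n, dist (γ (x (i+1))) (γ (x i)) ≤ 2 * lam * (x (i+1) - x i) := by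
    intro i hi
    rw [Finset.mem_range] at hi
    have h1 := (hγ (x (i+1)) (hmem (i+1) hi) (x i) (hmem i (le_of_lt hi))).2
    have hmi := hmono i hi
    rw [abs_of_nonneg (by linarith)] at h1
    have h2 := hmesh i hi
    linarith
  have hsum : ∑ i ∈ Finset.range n, dist (γ (x (i+1))) (γ (x i)) ≤ 2 * lam * l := by
    calc ∑ i ∈ Finset.range n, dist (γ (x (i+1))) (γ (x i))
        ≤ ∑ i ∈ Finset.range n, 2 * lam * (x (i+1) - x i) := Finset.sum_le_sum key
      _ = 2 * lam * (x n - x 0) := by rw [← Finset.mul_sum, Finset.sum_range_sub]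
      _ = 2 * lam * l := by rw [hx0, hxn]; ring
  have hql := (hγ 0 (left_mem_Icc.2 hl) l (right_mem_Icc.2 hl)).1
  rw [show |(0:ℝ) - l| = l by rw [abs_of_nonpos (by linarith)]; ring] at hql
  have hld : l ≤ 2 * lam * dist (γ 0) (γ l) := by
    have h3 : l / lam * lam = l := div_mul_cancel₀ l (ne_of_gt hlam0)
    nlinarith
  nlinarith [dist_nonneg (x := γ 0) (y := γ l)]
end

section
/- In a metric tree (a 0-hyperbolic geodesic space), for every λ ≥ 1 and c > 0 there exists a (λ, c)-quasi-geodesic γ and a geodesic σ joining its endpoints such that some point of γ is at distance λ²c/2 from σ. Concretely: let [a, b] be a geodesic segment of length λ²c/2, parameterize γ by I = [u, v] of length λc by γ(u) = γ(v) = a, γ(w) = b at the midpoint w, and |a - γ(x)| = λ·min(|u - x|, |v - x|) in general; then γ is a (λ, c)-quasi-geodesic and d(γ(w), σ) = λ²c/2 where σ is the degenerate geodesic from a to a. -/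
open Metric Set

/-- Optimality of the Morse lemma: in the tree ℝ, for every λ ≥ 1, c > 0 there is a
(λ,c)-quasi-geodesic `γ` with equal endpoints (so the geodesic σ joining them is the single
point γ 0) having a point at distance exactly `λ²c/2` from σ. -/
theorem morse_lemma_optimal (lam c : ℝ) (hlam : 1 ≤ lam) (hc : 0 < c) :
    ∃ (l : ℝ) (γ : ℝ → ℝ), 0 ≤ l ∧
      IsQuasiGeodesicOn lam c γ (Icc 0 l) ∧
      γ l = γ 0 ∧
      ∃ t ∈ Icc (0:ℝ) l, dist (γ t) (γ 0) = lam ^ 2 * c / 2 := by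
  have hlam0 : 0 < lam := lt_of_lt_of_le one_pos hlam
  refine ⟨lam * c, fun x => lam * min x (lam * c - x), by positivity, ?_, ?_, ?_⟩
  · intro s hs t ht
    obtain ⟨hs0, hs1⟩ := hs
    obtain ⟨ht0, ht1⟩ := ht
    constructor
    · have h1 : |s - t| ≤ lam * c := by
        rw [abs_sub_le_iff]; constructor <;> linarith
      have : |s - t| / lam ≤ c := by
        rw [div_le_iff₀ hlam0]
        calc |s - t| ≤ lam * c := h1
        _ = c * lam := by ring
      linarith [dist_nonneg (x := lam * min s (lam * c - s)) (y := lam * min t (lam * c - t))]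
    · have h2 : |min s (lam * c - s) - min t (lam * c - t)| ≤ |s - t| := by
        rcases le_total s (lam * c - s) with h3 | h3 <;>
          rcases le_total t (lam * c - t) with h4 | h4 <;>
          simp [min_eq_left, min_eq_right, h3, h4, abs_sub_le_iff] <;>
          constructor <;> cases abs_sub_le_iff.mp (le_refl |s - t|) <;>
          cases le_or_gt s t <;> cases abs_cases (s - t) <;> linarith
      have : dist (lam * min s (lam * c - s)) (lam * min t (lam * c - t))
          = lam * |min s (lam * c - s) - min t (lam * c - t)| := by
        rw [Real.dist_eq, ← mul_sub, abs_mul, abs_of_pos hlam0]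
      rw [this]
      nlinarith [abs_nonneg (s - t)]
  · have h : (0:ℝ) ≤ lam * c := by positivity
    simp only [sub_self, sub_zero, min_eq_right h, min_eq_left h]
  · refine ⟨lam * c / 2, ⟨by positivity, by nlinarith⟩, ?_⟩
    have h : (0:ℝ) ≤ lam * c := by positivity
    simp only [sub_zero, min_eq_left h]
    rw [show lam * c - lam * c / 2 = lam * c / 2 by ring, min_self, mul_zero,
      Real.dist_eq, sub_zero, abs_of_nonneg (by positivity)]
    ring
end

section
/- In a metric tree with a distinguished geodesic segment [O, p] of length λc/2 inside a ball B of radius R > λc centered at O, there exists a (λ, c)-self-quasi-isometry f of B that fixes all points at distance ≥ λc from O and satisfies d(O, f(O)) = λc/2. (Construction: f collapses [O, f(O)] to the point f(O) = p and, for each boundary point a of the ball of radius λc, linearly stretches the segment from a to its projection a' on [O, p] onto the segment [a, p].) -/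
open Metric Set

private lemma img_compact {X : Type*} [MetricSpace X] (h : ℝ → X) (e : ℝ)
    (hi : ∀ a ∈ Icc (0:ℝ) e, ∀ a' ∈ Icc (0:ℝ) e, dist (h a) (h a') = |a - a'|) :
    IsCompact (h '' Icc (0:ℝ) e) := by
  apply isCompact_Icc.image_of_continuousOn
  have hl : LipschitzOnWith 1 h (Icc (0:ℝ) e) := by
    apply LipschitzOnWith.of_dist_le_mul
    intro a ha a' ha'
    rw [hi a ha a' ha', Real.dist_eq]
    simp
  exact hl.continuousOn

set_option maxHeartbeats 1000000 in
/-- Distance formula for two points on geodesics issued from a common basepoint `b`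
in a geodesic 0-hyperbolic space:
`dist (α s) (β t) = s + t - 2 * min (min s t) ((x·y)_b)`. -/
private lemma geod_formula {X : Type*} [MetricSpace X]
    (hgeo : GeodesicSpace X) (htree : ThinTriangles X 0)
    (b x y : X) (α β : ℝ → X)
    (hα0 : α 0 = b) (hαe : α (dist b x) = x)
    (hαi : ∀ a ∈ Icc (0:ℝ) (dist b x), ∀ a' ∈ Icc (0:ℝ) (dist b x),
      dist (α a) (α a') = |a - a'|)
    (hβ0 : β 0 = b) (hβe : β (dist b y) = y)
    (hβi : ∀ a ∈ Icc (0:ℝ) (dist b y), ∀ a' ∈ Icc (0:ℝ) (dist b y),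
      dist (β a) (β a') = |a - a'|)
    {s t : ℝ} (hs : s ∈ Icc (0:ℝ) (dist b x)) (ht : t ∈ Icc (0:ℝ) (dist b y)) :
    dist (α s) (β t) = s + t - 2 * min (min s t) ((dist b x + dist b y - dist x y) / 2) := by
  set Dx := dist b x with hDx
  set Dy := dist b y with hDy
  set m := (Dx + Dy - dist x y) / 2 with hm
  have tri1 : dist x y ≤ Dx + Dy := by
    calc dist x y ≤ dist x b + dist b y := dist_triangle _ _ _
    _ = Dx + Dy := by rw [dist_comm x b]
  have tri2 : Dy ≤ Dx + dist x y := dist_triangle b x y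
  have tri3 : Dx ≤ Dy + dist x y := by
    calc Dx ≤ dist b y + dist y x := dist_triangle b y x
    _ = Dy + dist x y := by rw [dist_comm y x]
  have hm0 : 0 ≤ m := by rw [hm]; linarith
  have hmx : m ≤ Dx := by rw [hm]; linarith
  have hmy : m ≤ Dy := by rw [hm]; linarith
  have hαc : ∀ a ∈ Icc (0:ℝ) Dx, dist b (α a) = a := by
    intro a ha
    rw [← hα0, hαi 0 ⟨le_refl 0, dist_nonneg⟩ a ha, zero_sub, abs_neg, abs_of_nonneg ha.1]
  have hβc : ∀ a ∈ Icc (0:ℝ) Dy, dist b (β a) = a := by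
    intro a ha
    rw [← hβ0, hβi 0 ⟨le_refl 0, dist_nonneg⟩ a ha, zero_sub, abs_neg, abs_of_nonneg ha.1]
  have key1 : ∀ s', 0 ≤ s' → s' < m → α s' = β s' := by
    intro s' h0 hlt
    have hs'x : s' ∈ Icc (0:ℝ) Dx := ⟨h0, le_trans hlt.le hmx⟩
    have hs'y : s' ∈ Icc (0:ℝ) Dy := ⟨h0, le_trans hlt.le hmy⟩
    obtain ⟨S, hS⟩ := hgeo x y
    have hSA : IsGeodSeg b x (α '' Icc (0:ℝ) Dx) := ⟨α, hα0, hαe, hαi, rfl⟩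
    have hSB : IsGeodSeg b y (β '' Icc (0:ℝ) Dy) := ⟨β, hβ0, hβe, hβi, rfl⟩
    have hmemA : α s' ∈ α '' Icc (0:ℝ) Dx := ⟨s', hs'x, rfl⟩
    have hinf := htree b x y _ S _ hSA hS hSB (α s') hmemA
    obtain ⟨g, hg0, hge, hgi, hSeq⟩ := hS
    have hcS : IsCompact S := by rw [hSeq]; exact img_compact g _ hgi
    have hcB : IsCompact (β '' Icc (0:ℝ) Dy) := img_compact β _ hβi
    have hclosed : IsClosed (S ∪ β '' Icc (0:ℝ) Dy) := (hcS.union hcB).isClosed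
    have hne : (S ∪ β '' Icc (0:ℝ) Dy).Nonempty :=
      ⟨b, Or.inr ⟨0, ⟨le_refl 0, dist_nonneg⟩, hβ0⟩⟩
    have hmem : α s' ∈ S ∪ β '' Icc (0:ℝ) Dy := by
      rw [hclosed.mem_iff_infDist_zero hne]
      exact le_antisymm hinf infDist_nonneg
    rcases hmem with hmem | hmem
    · exfalso
      rw [hSeq] at hmem
      obtain ⟨r, hr, hgr⟩ := hmem
      have e1 : dist x (α s') = Dx - s' := by
        rw [← hαe, hαi Dx ⟨dist_nonneg, le_refl Dx⟩ s' hs'x,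
          abs_of_nonneg (by linarith [hs'x.2])]
      have e2 : dist x (α s') = r := by
        rw [← hgr, ← hg0, hgi 0 ⟨le_refl 0, dist_nonneg⟩ r hr, zero_sub, abs_neg,
          abs_of_nonneg hr.1]
      have e3 : dist y (α s') = dist x y - r := by
        have h' := hgi (dist x y) ⟨dist_nonneg, le_refl _⟩ r hr
        rw [hge, hgr] at h'
        rw [h', abs_of_nonneg (by linarith [hr.2])]
      have e4 : Dy ≤ dist b (α s') + dist (α s') y := dist_triangle b (α s') y
      rw [hαc s' hs'x, dist_comm (α s') y, e3] at e4
      have e5 : r = Dx - s' := by rw [← e2, e1]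
      rw [e5] at e4
      have : m ≤ s' := by rw [hm]; linarith
      linarith
    · obtain ⟨t', ht', hβt⟩ := hmem
      have h1 : dist b (β t') = t' := hβc t' ht'
      rw [hβt, hαc s' hs'x] at h1
      rw [← h1] at hβt
      exact hβt.symm
  have key2 : ∀ s', 0 ≤ s' → s' ≤ m → dist (α s') (β s') = 0 := by
    intro s' h0 hle
    rcases eq_or_lt_of_le h0 with h | h
    · rw [← h, hα0, hβ0, dist_self]
    rcases lt_or_eq_of_le hle with h' | h'
    · rw [key1 s' h0 h', dist_self]
    · apply le_antisymm _ dist_nonneg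
      apply le_of_forall_pos_le_add
      intro ε hε
      set s'' := max 0 (s' - ε/2) with hs''
      have h1 : 0 ≤ s'' := le_max_left _ _
      have h2 : s'' < s' := by
        rw [hs'']
        rcases le_total (s' - ε/2) 0 with h'' | h''
        · rw [max_eq_left h'']; exact h
        · rw [max_eq_right h'']; linarith
      have h3 : s' - s'' ≤ ε/2 := by
        rw [hs'']
        rcases le_total (s' - ε/2) 0 with h'' | h''
        · rw [max_eq_left h'']; linarith
        · rw [max_eq_right h'']; linarith
      have hIx : s'' ∈ Icc (0:ℝ) Dx := ⟨h1, by linarith [le_trans hle hmx]⟩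
      have hIy : s'' ∈ Icc (0:ℝ) Dy := ⟨h1, by linarith [le_trans hle hmy]⟩
      have hsx : s' ∈ Icc (0:ℝ) Dx := ⟨h0, le_trans hle hmx⟩
      have hsy : s' ∈ Icc (0:ℝ) Dy := ⟨h0, le_trans hle hmy⟩
      have c1 : dist (α s') (α s'') = s' - s'' := by
        rw [hαi _ hsx _ hIx, abs_of_nonneg (by linarith)]
      have c2 : dist (β s'') (β s') = s' - s'' := by
        rw [hβi _ hIy _ hsy, abs_of_nonpos (by linarith), neg_sub]
      have c3 : dist (α s'') (β s'') = 0 := by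
        rw [key1 s'' h1 (by rw [← h']; exact h2), dist_self]
      calc dist (α s') (β s') ≤
          dist (α s') (α s'') + dist (α s'') (β s'') + dist (β s'') (β s') :=
            dist_triangle4 _ _ _ _
        _ = (s' - s'') + 0 + (s' - s'') := by rw [c1, c2, c3]
        _ ≤ 0 + ε := by linarith
  set μ := min (min s t) m with hμ
  have hμs : μ ≤ s := le_trans (min_le_left _ _) (min_le_left _ _)
  have hμt : μ ≤ t := le_trans (min_le_left _ _) (min_le_right _ _)
  have hμm : μ ≤ m := min_le_right _ _
  have hμ0 : 0 ≤ μ := le_min (le_min hs.1 ht.1) hm0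
  have hμx : μ ∈ Icc (0:ℝ) Dx := ⟨hμ0, le_trans hμs hs.2⟩
  have hμy : μ ∈ Icc (0:ℝ) Dy := ⟨hμ0, le_trans hμt ht.2⟩
  have hub : dist (α s) (β t) ≤ s + t - 2 * μ := by
    have c1 : dist (α s) (α μ) = s - μ := by
      rw [hαi _ hs _ hμx, abs_of_nonneg (by linarith)]
    have c2 : dist (β μ) (β t) = t - μ := by
      rw [hβi _ hμy _ ht, abs_of_nonpos (by linarith), neg_sub]
    have c3 : dist (α μ) (β μ) = 0 := key2 μ hμ0 hμm
    calc dist (α s) (β t) ≤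
        dist (α s) (α μ) + dist (α μ) (β μ) + dist (β μ) (β t) := dist_triangle4 _ _ _ _
      _ = s + t - 2 * μ := by rw [c1, c2, c3]; ring
  have hlb1 : t - s ≤ dist (α s) (β t) := by
    have h := dist_triangle b (α s) (β t)
    rw [hαc s hs, hβc t ht] at h
    linarith
  have hlb1' : s - t ≤ dist (α s) (β t) := by
    have h := dist_triangle b (β t) (α s)
    rw [hαc s hs, hβc t ht, dist_comm (β t) (α s)] at h
    linarith
  have hlb2 : s + t - 2 * m ≤ dist (α s) (β t) := by
    have e1 : dist x (α s) = Dx - s := by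
      rw [← hαe, hαi Dx ⟨dist_nonneg, le_refl _⟩ s hs, abs_of_nonneg (by linarith [hs.2])]
    have e2 : dist (β t) y = Dy - t := by
      rw [← hβe, hβi t ht Dy ⟨dist_nonneg, le_refl _⟩, abs_of_nonpos (by linarith [ht.2]),
        neg_sub]
    have h := dist_triangle4 x (α s) (β t) y
    rw [e1, e2] at h
    rw [hm]
    linarith
  apply le_antisymm hub
  rcases le_total (min s t) m with hcse | hcse
  · have hμe : μ = min s t := by rw [hμ, min_eq_left hcse]
    rcases le_total s t with hst | hst
    · rw [hμe, min_eq_left hst]; linarith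
    · rw [hμe, min_eq_right hst]; linarith
  · have hμe : μ = m := by rw [hμ, min_eq_right hcse]
    rw [hμe]; linarith

set_option maxHeartbeats 2000000 in
/-- In a metric tree (geodesic 0-hyperbolic space) with a geodesic segment `[O, p]` of length
`λc/2` inside a ball `B` of radius `R > λc` centered at `O`, there is a (λ,c)-self-quasi-isometry
of `B` fixing all points at distance ≥ λc from `O` and moving the center `O` to `p`,
a displacement of exactly `λc/2`. -/
theorem tree_ball_self_quasi_isometry_moving_center {X : Type*} [MetricSpace X]
    (hgeo : GeodesicSpace X) (htree : ThinTriangles X 0)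
    (lam c R : ℝ) (hlam : 1 ≤ lam) (hc : 0 < c) (hR : lam * c < R)
    (O p : X) (τ : Set X) (hτ : IsGeodSeg O p τ) (hOp : dist O p = lam * c / 2) :
    ∃ f : X → X,
      Set.MapsTo f (closedBall O R) (closedBall O R) ∧
      (∀ x ∈ closedBall O R, ∀ y ∈ closedBall O R,
        dist x y / lam - c ≤ dist (f x) (f y) ∧ dist (f x) (f y) ≤ lam * dist x y + c) ∧
      (∀ y ∈ closedBall O R, ∃ x ∈ closedBall O R, dist (f x) y ≤ c) ∧
      (∀ x ∈ closedBall O R, lam * c ≤ dist x O → f x = x) ∧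
      f O = p ∧ dist O (f O) = lam * c / 2 := by
  classical
  have hlam0 : (0:ℝ) < lam := lt_of_lt_of_le one_pos hlam
  have hc2 : 0 < lam * c := mul_pos hlam0 hc
  obtain ⟨γ, hγ0, hγe, hγi, -⟩ := hτ
  have hL0 : (0:ℝ) ≤ dist O p := dist_nonneg
  have hpO : dist p O = dist O p := dist_comm p O
  -- geodesics from p to arbitrary points
  have hAex : ∀ z : X, ∃ g : ℝ → X, g 0 = p ∧ g (dist p z) = z ∧
      ∀ a ∈ Icc (0:ℝ) (dist p z), ∀ a' ∈ Icc (0:ℝ) (dist p z),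
        dist (g a) (g a') = |a - a'| := by
    intro z; obtain ⟨S, g, h1, h2, h3, -⟩ := hgeo p z; exact ⟨g, h1, h2, h3⟩
  choose α hα0 hαe hαi using hAex
  -- geodesics from O to arbitrary points
  have hDex : ∀ z : X, ∃ g : ℝ → X, g 0 = O ∧ g (dist O z) = z ∧
      ∀ a ∈ Icc (0:ℝ) (dist O z), ∀ a' ∈ Icc (0:ℝ) (dist O z),
        dist (g a) (g a') = |a - a'| := by
    intro z; obtain ⟨S, g, h1, h2, h3, -⟩ := hgeo O z; exact ⟨g, h1, h2, h3⟩
  choose δ hδ0 hδe hδi using hDex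
  -- the reversed parametrization of τ : a geodesic from p to O
  set ρ : ℝ → X := fun s => γ (dist O p - s) with hρdef
  have hρ0 : ρ 0 = p := by
    show γ (dist O p - 0) = p
    rw [sub_zero]; exact hγe
  have hρe : ρ (dist p O) = O := by
    show γ (dist O p - dist p O) = O
    rw [hpO, sub_self]; exact hγ0
  have hρi : ∀ a ∈ Icc (0:ℝ) (dist p O), ∀ a' ∈ Icc (0:ℝ) (dist p O),
      dist (ρ a) (ρ a') = |a - a'| := by
    intro a ha a' ha'
    rw [hpO] at ha ha'
    show dist (γ (dist O p - a)) (γ (dist O p - a')) = |a - a'|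
    rw [hγi (dist O p - a) ⟨by linarith [ha.2], by linarith [ha.1]⟩
      (dist O p - a') ⟨by linarith [ha'.2], by linarith [ha'.1]⟩,
      show (dist O p - a) - (dist O p - a') = a' - a by ring, abs_sub_comm]
  -- parameters on τ
  have hγO : ∀ s'', 0 ≤ s'' → s'' ≤ dist O p → dist O (γ s'') = s'' := by
    intro s'' h1 h2
    rw [← hγ0, hγi 0 ⟨le_refl _, hL0⟩ s'' ⟨h1, h2⟩, zero_sub, abs_neg, abs_of_nonneg h1]
  have hγp : ∀ s'', 0 ≤ s'' → s'' ≤ dist O p → dist p (γ s'') = dist O p - s'' := by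
    intro s'' h1 h2
    have h' := hγi (dist O p) ⟨hL0, le_refl _⟩ s'' ⟨h1, h2⟩
    rw [hγe] at h'
    rw [h', abs_of_nonneg (by linarith)]
  -- the map
  set j : X → ℝ := fun z => if lam * c / 2 ≤ dist O z then c else 0 with hjdef
  set σ : X → ℝ := fun z => min (dist p z) (lam * dist O z + j z) with hσdef
  set F : X → X := fun z => α z (σ z) with hFdef
  have hj0 : ∀ z, 0 ≤ j z := by
    intro z; rw [hjdef]; dsimp only; split <;> linarith
  have hjc : ∀ z, j z ≤ c := by
    intro z; rw [hjdef]; dsimp only; split <;> linarith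
  have hσ0 : ∀ z, 0 ≤ σ z := by
    intro z; rw [hσdef]; dsimp only
    refine le_min dist_nonneg ?_
    have h1 : 0 ≤ lam * dist O z := mul_nonneg hlam0.le dist_nonneg
    linarith [hj0 z]
  have hσP : ∀ z, σ z ≤ dist p z := by
    intro z; rw [hσdef]; dsimp only; exact min_le_left _ _
  have hσmem : ∀ z, σ z ∈ Icc (0:ℝ) (dist p z) := fun z => ⟨hσ0 z, hσP z⟩
  have hFx : ∀ z, dist (F z) z = dist p z - σ z := by
    intro z
    have h := hαi z (σ z) (hσmem z) (dist p z) ⟨dist_nonneg, le_refl _⟩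
    rw [hαe z] at h
    rw [hFdef]; dsimp only
    rw [h, abs_of_nonpos (by linarith [hσP z]), neg_sub]
  -- distance between images
  have main : ∀ x y : X, dist (F x) (F y) =
      σ x + σ y - 2 * min (min (σ x) (σ y)) ((dist p x + dist p y - dist x y) / 2) := by
    intro x y
    have h := geod_formula hgeo htree p x y (α x) (α y) (hα0 x) (hαe x) (hαi x)
      (hα0 y) (hαe y) (hαi y) (hσmem x) (hσmem y)
    rw [hFdef]; dsimp only; exact h
  -- distance from center to images
  have hFObd : ∀ z, dist (F z) O ≤ max (dist O p) (dist z O) := by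
    intro z
    have h := geod_formula hgeo htree p z O (α z) ρ (hα0 z) (hαe z) (hαi z)
      hρ0 hρe hρi (hσmem z) ⟨dist_nonneg, le_refl (dist p O)⟩
    rw [hρe] at h
    have hFh : dist (F z) O =
        σ z + dist p O - 2 * min (min (σ z) (dist p O)) ((dist p z + dist p O - dist z O) / 2) := by
      rw [hFdef]; dsimp only; exact h
    have hw0 : 0 ≤ (dist p z + dist p O - dist z O) / 2 := by
      have h' := dist_triangle z p O
      rw [dist_comm z p] at h'
      linarith
    have hwL : (dist p z + dist p O - dist z O) / 2 ≤ dist p O := by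
      have h1 := dist_triangle p O z
      have h2 : dist p z ≤ dist p O + dist O z := dist_triangle p O z
      rw [dist_comm O z] at h2
      linarith
    rcases le_total (σ z) ((dist p z + dist p O - dist z O) / 2) with hcase | hcase
    · rw [min_eq_left (le_trans hcase hwL), min_eq_left hcase] at hFh
      rw [hFh, hpO]
      have := hσ0 z
      linarith [le_max_left (dist O p) (dist z O)]
    · rw [min_eq_right (le_min hcase hwL)] at hFh
      rw [hFh]
      have h1 := hσP z
      linarith [le_max_right (dist O p) (dist z O), hpO]
  -- coarse Lipschitz bound for σ
  have hkey : ∀ a b : X, σ a ≤ σ b + (lam * dist a b + c) := by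
    intro a b
    have hdd : dist b a = dist a b := dist_comm b a
    rcases le_total (dist p b) (lam * dist O b + j b) with hbb | hbb
    · have hb : σ b = dist p b := by rw [hσdef]; dsimp only; exact min_eq_left hbb
      have ha : σ a ≤ dist p a := hσP a
      have h1 : dist p a ≤ dist p b + dist b a := dist_triangle p b a
      have h2 : dist a b ≤ lam * dist a b := by nlinarith [dist_nonneg (x := a) (y := b)]
      rw [hb]; linarith
    · have hb : σ b = lam * dist O b + j b := by rw [hσdef]; dsimp only; exact min_eq_right hbb
      have ha : σ a ≤ lam * dist O a + j a := by
        rw [hσdef]; dsimp only; exact min_le_right _ _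
      have h1 : dist O a ≤ dist O b + dist b a := dist_triangle O b a
      have h2 : lam * dist O a ≤ lam * dist O b + lam * dist a b := by
        rw [← hdd]; nlinarith
      have h3 := hjc a
      have h4 := hj0 b
      rw [hb]; linarith
  -- upper quasi-isometry bound
  have hUB : ∀ x y : X, dist (F x) (F y) ≤ lam * dist x y + c := by
    intro x y
    have h := main x y
    have hm0 : 0 ≤ (dist p x + dist p y - dist x y) / 2 := by
      have h1 : dist x y ≤ dist x p + dist p y := dist_triangle x p y
      rw [dist_comm x p] at h1
      linarith
    rcases le_total (min (σ x) (σ y)) ((dist p x + dist p y - dist x y) / 2) with hcse | hcse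
    · rw [min_eq_left hcse] at h
      rcases le_total (σ x) (σ y) with hxy | hxy
      · rw [min_eq_left hxy] at h
        have hk := hkey y x
        rw [dist_comm y x] at hk
        linarith
      · rw [min_eq_right hxy] at h
        have hk := hkey x y
        linarith
    · rw [min_eq_right hcse] at h
      have h1 := hσP x
      have h2 := hσP y
      have h3 : dist x y ≤ lam * dist x y := by nlinarith [dist_nonneg (x := x) (y := y)]
      linarith
  -- displacement bound
  have hdisp : ∀ z : X, dist z (F z) ≤ lam * c / 2 := by
    intro z
    rw [dist_comm, hFx z]
    rcases le_total (dist p z) (lam * dist O z + j z) with hcse | hcse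
    · have he : σ z = dist p z := by rw [hσdef]; dsimp only; exact min_eq_left hcse
      rw [he]; linarith
    · have he : σ z = lam * dist O z + j z := by
        rw [hσdef]; dsimp only; exact min_eq_right hcse
      rw [he]
      have h1 : dist p z ≤ dist p O + dist O z := dist_triangle p O z
      have h3 := hj0 z
      have h4 : dist O z ≤ lam * dist O z := by nlinarith [dist_nonneg (x := O) (y := z)]
      rw [hpO, hOp] at h1
      linarith
  -- lower quasi-isometry bound
  have hLB : ∀ x y : X, dist x y / lam - c ≤ dist (F x) (F y) := by
    intro x y
    have h4 := dist_triangle4 x (F x) (F y) y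
    have d1 := hdisp x
    have d2 := hdisp y
    have hd2 : dist (F y) y = dist y (F y) := dist_comm _ _
    rcases le_total (dist x y) (lam * c) with hcse | hcse
    · have hdl : dist x y / lam ≤ c := by
        rw [div_le_iff₀ hlam0]; linarith [mul_comm c lam]
      linarith [dist_nonneg (x := F x) (y := F y)]
    · have h5 : dist x y - lam * c ≤ dist (F x) (F y) := by linarith
      have h6 : dist x y / lam ≤ dist x y - lam * c + c := by
        rw [div_le_iff₀ hlam0]
        nlinarith [mul_nonneg (sub_nonneg.mpr hlam) (sub_nonneg.mpr hcse)]
      linarith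
  -- fixing of γ-points whose parameter is large enough
  have hfix : ∀ s'', 0 ≤ s'' → s'' ≤ dist O p →
      dist O p - s'' ≤ lam * s'' + j (γ s'') → F (γ s'') = γ s'' := by
    intro s'' h1 h2 h3
    have hd1 := hγO s'' h1 h2
    have hd2 := hγp s'' h1 h2
    have hσe : σ (γ s'') = dist p (γ s'') := by
      rw [hσdef]; dsimp only
      apply min_eq_left
      rw [hd1, hd2]
      exact h3
    rw [hFdef]; dsimp only
    rw [hσe, hαe]
  -- density
  have hdense : ∀ y ∈ closedBall O R, ∃ x ∈ closedBall O R, dist (F x) y ≤ c := by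
    intro y hy
    set u := (dist O y + dist O p - dist p y) / 2 with hu
    set v := (dist O y + dist p y - dist O p) / 2 with hv
    have tri1 : dist p y ≤ dist O p + dist O y := by
      have := dist_triangle p O y; rw [hpO] at this; linarith
    have tri2 : dist O p ≤ dist O y + dist p y := by
      have := dist_triangle O y p; rw [dist_comm y p] at this; linarith
    have tri3 : dist O y ≤ dist O p + dist p y := dist_triangle O p y
    have hu0 : 0 ≤ u := by rw [hu]; linarith
    have huL : u ≤ dist O p := by rw [hu]; linarith
    have huD : u ≤ dist O y := by rw [hu]; linarith
    have hv0 : 0 ≤ v := by rw [hv]; linarith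
    rcases le_total v (c/2) with hvc | hvc
    · -- y is close to τ
      have hyγ : dist y (γ u) = v := by
        have h := geod_formula hgeo htree O y p (δ y) γ (hδ0 y) (hδe y) (hδi y)
          hγ0 hγe hγi (s := dist O y) (t := u) ⟨dist_nonneg, le_refl _⟩ ⟨hu0, huL⟩
        rw [hδe y] at h
        have hm3 : (dist O y + dist O p - dist y p) / 2 = u := by
          rw [dist_comm y p, hu]
        rw [hm3, min_eq_right huD, min_self] at h
        rw [h, hv, hu]
        ring
      have h1lam : (0:ℝ) < 1 + lam := by linarith
      rcases le_total u (dist O p / (1 + lam)) with hus | hus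
      · -- use the fixed point γ s0 on τ
        set s0 := dist O p / (1 + lam) with hs0
        have hs00 : 0 ≤ s0 := div_nonneg hL0 h1lam.le
        have hs0L : s0 ≤ dist O p := by
          rw [hs0, div_le_iff₀ h1lam]; nlinarith
        have hlams0 : lam * s0 = dist O p - s0 := by
          rw [hs0]; field_simp; ring
        have hfix0 : F (γ s0) = γ s0 := by
          apply hfix s0 hs00 hs0L
          rw [hlams0]
          linarith [hj0 (γ s0)]
        refine ⟨γ s0, ?_, ?_⟩
        · rw [mem_closedBall, dist_comm, hγO s0 hs00 hs0L]
          rw [hOp] at hs0L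
          linarith
        · rw [hfix0]
          have hdγ : dist (γ s0) (γ u) = s0 - u := by
            rw [hγi s0 ⟨hs00, hs0L⟩ u ⟨hu0, huL⟩, abs_of_nonneg (by linarith)]
          have htri : dist (γ s0) y ≤ dist (γ s0) (γ u) + dist (γ u) y := dist_triangle _ _ _
          rw [hdγ, dist_comm (γ u) y, hyγ] at htri
          have hs0c : s0 ≤ c / 2 := by
            rw [hs0, div_le_iff₀ h1lam, hOp]
            nlinarith
          linarith
      · -- use the fixed point γ u on τ
        have hfixu : F (γ u) = γ u := by
          apply hfix u hu0 huL
          rw [div_le_iff₀ h1lam] at hus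
          have : dist O p - u ≤ lam * u := by nlinarith
          linarith [hj0 (γ u)]
        refine ⟨γ u, ?_, ?_⟩
        · rw [mem_closedBall, dist_comm, hγO u hu0 huL]
          rw [hOp] at huL
          linarith
        · rw [hfixu, dist_comm]
          rw [hyγ]
          linarith
    · -- y is far from τ : F y itself is close to y
      refine ⟨y, hy, ?_⟩
      rw [hFx y]
      have e1 : dist p y = dist O p - u + v := by rw [hu, hv]; ring
      have e2 : dist O y = u + v := by rw [hu, hv]; ring
      rcases le_total (dist p y) (lam * dist O y + j y) with hcm | hcm
      · have he : σ y = dist p y := by rw [hσdef]; dsimp only; exact min_eq_left hcm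
        rw [he]; linarith
      · have he : σ y = lam * dist O y + j y := by
          rw [hσdef]; dsimp only; exact min_eq_right hcm
        rw [he]
        have h3 := hj0 y
        have h4 : (lam - 1) * (c/2) ≤ (lam - 1) * v :=
          mul_le_mul_of_nonneg_left hvc (by linarith)
        have h5 : 0 ≤ lam * u := mul_nonneg hlam0.le hu0
        rw [e1, e2, hOp]
        nlinarith
  -- far points are fixed
  have hfixfar : ∀ x : X, lam * c ≤ dist x O → F x = x := by
    intro x hfar
    have hD : lam * c ≤ dist O x := by rw [dist_comm]; exact hfar
    have hjx : j x = c := by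
      rw [hjdef]; dsimp only; rw [if_pos (by linarith)]
    have hσe : σ x = dist p x := by
      rw [hσdef]; dsimp only
      apply min_eq_left
      have h1 : dist p x ≤ dist p O + dist O x := dist_triangle p O x
      rw [hpO, hOp] at h1
      rw [hjx]
      nlinarith [mul_nonneg (sub_nonneg.mpr hlam) (sub_nonneg.mpr hD),
        mul_nonneg hc.le (sq_nonneg (lam - 3/4))]
    rw [hFdef]; dsimp only
    rw [hσe, hαe]
  -- F O = p
  have hFOp : F O = p := by
    have hjO : j O = 0 := by
      rw [hjdef]; dsimp only
      rw [if_neg]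
      rw [dist_self]
      linarith
    have hσO : σ O = 0 := by
      rw [hσdef]; dsimp only
      rw [dist_self, hjO, mul_zero, add_zero]
      exact min_eq_right dist_nonneg
    rw [hFdef]; dsimp only
    rw [hσO, hα0]
  refine ⟨F, ?_, ?_, ?_, ?_, hFOp, ?_⟩
  · intro z hz
    rw [mem_closedBall] at hz ⊢
    refine le_trans (hFObd z) (max_le ?_ hz)
    rw [hOp]
    linarith
  · intro x _ y _
    exact ⟨hLB x y, hUB x y⟩
  · exact hdense
  · intro x _ hfar
    exact hfixfar x hfar
  · rw [hFOp]
    exact hOp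
end
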